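/- Let n be a positive integer and let x be an n×n complex matrix such that I − x xᴴ and I − xᴴ x are (Hermitian) positive definite. Then (I − x xᴴ)^{−1/2} · x · (I − xᴴ x)^{1/2} = x, where M^{1/2} denotes the unique positive semidefinite square root of a positive semidefinite Hermitian matrix M and M^{−1/2} denotes the inverse of M^{1/2}. -/

import Mathlib

open Matrix
open scoped ComplexOrder

/-- The square root of a positive semidefinite matrix, as defined in Mathlib (December 2024),
since removed from Mathlib. -/
noncomputable def Matrix.PosSemidef.sqrt {n : Type*} [Fintype n] [DecidableEq n] {𝕜 : Type*} [RCLike 𝕜]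
    {A : Matrix n n 𝕜} (hA : A.PosSemidef) : Matrix n n 𝕜 :=
  hA.1.eigenvectorUnitary.1 * diagonal ((↑) ∘ (√·) ∘ hA.1.eigenvalues) *
    (star hA.1.eigenvectorUnitary : Matrix n n 𝕜)

lemma Matrix.PosSemidef.posSemidef_sqrt {n : Type*} [Fintype n] [DecidableEq n] {𝕜 : Type*}
    [RCLike 𝕜] {A : Matrix n n 𝕜} (hA : A.PosSemidef) : hA.sqrt.PosSemidef := by
  unfold Matrix.PosSemidef.sqrt
  have hd : (diagonal ((↑) ∘ (√·) ∘ hA.1.eigenvalues : n → 𝕜)).PosSemidef := by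
    refine posSemidef_diagonal_iff.mpr fun i => ?_
    rw [Function.comp_apply, RCLike.nonneg_iff]
    constructor
    · simp only [Function.comp_apply, RCLike.ofReal_re]
      exact Real.sqrt_nonneg _
    · simp only [Function.comp_apply, RCLike.ofReal_im]
  have := hd.mul_mul_conjTranspose_same (hA.1.eigenvectorUnitary : Matrix n n 𝕜)
  simpa [Matrix.star_eq_conjTranspose] using this

lemma Matrix.PosSemidef.sqrt_mul_self {n : Type*} [Fintype n] [DecidableEq n] {𝕜 : Type*}
    [RCLike 𝕜] {A : Matrix n n 𝕜} (hA : A.PosSemidef) : hA.sqrt * hA.sqrt = A := by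
  unfold Matrix.PosSemidef.sqrt
  set C : Matrix n n 𝕜 := hA.1.eigenvectorUnitary.1
  have hC : star C * C = 1 := Unitary.star_mul_self_of_mem hA.1.eigenvectorUnitary.2
  have hspec := hA.1.spectral_theorem
  conv_rhs => rw [hspec]
  rw [Unitary.conjStarAlgAut_apply]
  have e : C * diagonal ((↑) ∘ (√·) ∘ hA.1.eigenvalues) * star C *
      (C * diagonal ((↑) ∘ (√·) ∘ hA.1.eigenvalues) * star C) =
      C * (diagonal ((↑) ∘ (√·) ∘ hA.1.eigenvalues) * (star C * C) *
        diagonal ((↑) ∘ (√·) ∘ hA.1.eigenvalues)) * star C := by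
    simp only [Matrix.mul_assoc]
  rw [e, hC, Matrix.mul_one, diagonal_mul_diagonal]
  congr 3
  funext i
  simp only [Function.comp_apply]
  rw [← RCLike.ofReal_mul, Real.mul_self_sqrt (hA.eigenvalues_nonneg i)]

private lemma trace_ct_mul_self_nonneg {n : ℕ} (Y : Matrix (Fin n) (Fin n) ℂ) :
    0 ≤ (Yᴴ * Y).trace := by
  simp only [Matrix.trace, Matrix.diag, Matrix.mul_apply, Matrix.conjTranspose_apply]
  refine Finset.sum_nonneg fun j _ => Finset.sum_nonneg fun i _ => star_mul_self_nonneg _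

private lemma eq_zero_of_trace_ct_mul_self_eq_zero {n : ℕ} {Y : Matrix (Fin n) (Fin n) ℂ}
    (h : (Yᴴ * Y).trace = 0) : Y = 0 := by
  simp only [Matrix.trace, Matrix.diag, Matrix.mul_apply, Matrix.conjTranspose_apply] at h
  rw [Finset.sum_eq_zero_iff_of_nonneg
    (fun j _ => Finset.sum_nonneg fun i _ => star_mul_self_nonneg _)] at h
  ext i j
  have := h j (Finset.mem_univ j)
  rw [Finset.sum_eq_zero_iff_of_nonneg (fun i _ => star_mul_self_nonneg _)] at this
  have := this i (Finset.mem_univ i)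
  simpa [mul_eq_zero] using this

/-- Lemma C.1 (first identity): for `x` with `I - x xᴴ` and `I - xᴴ x` positive definite,
`(I - x xᴴ)^{-1/2} * x * (I - xᴴ x)^{1/2} = x`. -/
theorem siegel_sqrt_conjugation_identity {n : ℕ} (hn : 0 < n)
    (x : Matrix (Fin n) (Fin n) ℂ)
    (h1 : (1 - x * xᴴ).PosDef) (h2 : (1 - xᴴ * x).PosDef) :
    (h1.posSemidef.sqrt)⁻¹ * x * h2.posSemidef.sqrt = x := by
  set A := h1.posSemidef.sqrt with hAdef
  set B := h2.posSemidef.sqrt with hBdef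
  have hA : A.PosSemidef := h1.posSemidef.posSemidef_sqrt
  have hB : B.PosSemidef := h2.posSemidef.posSemidef_sqrt
  have hA2 : A * A = 1 - x * xᴴ := h1.posSemidef.sqrt_mul_self
  have hB2 : B * B = 1 - xᴴ * x := h2.posSemidef.sqrt_mul_self
  -- A invertible
  have hdetA : IsUnit A.det := by
    have : A.det * A.det = (1 - x * xᴴ).det := by rw [← Matrix.det_mul, hA2]
    have hne : A.det ≠ 0 := by
      intro h0
      rw [h0, mul_zero] at this
      exact h1.det_pos.ne' this.symm
    exact hne.isUnit
  set M := A * x - x * B with hMdef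
  have key : A * M = -(M * B) := by
    have : A * M + M * B = 0 := by
      have expand : A * M + M * B = A * A * x - x * (B * B) := by
        rw [hMdef]; noncomm_ring
      rw [expand, hA2, hB2]
      noncomm_ring
    linear_combination (norm := noncomm_ring) this
  -- S = sqrt A, T = sqrt B
  set S := hA.sqrt with hSdef
  set T := hB.sqrt with hTdef
  have hS2 : S * S = A := hA.sqrt_mul_self
  have hT2 : T * T = B := hB.sqrt_mul_self
  have hSH : Sᴴ = S := hA.posSemidef_sqrt.1
  have hTH : Tᴴ = T := hB.posSemidef_sqrt.1
  have traceeq : ((S * M)ᴴ * (S * M)).trace = -(((M * T)ᴴ * (M * T)).trace) := by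
    have e1 : (S * M)ᴴ * (S * M) = Mᴴ * (A * M) := by
      rw [Matrix.conjTranspose_mul, hSH, Matrix.mul_assoc, ← Matrix.mul_assoc S S M, hS2]
    have e2 : Mᴴ * (A * M) = -(Mᴴ * M * T * T) := by
      rw [key]
      rw [← hT2]
      noncomm_ring
    rw [e1, e2, Matrix.trace_neg, neg_inj]
    have e3 : (M * T)ᴴ * (M * T) = T * (Mᴴ * M * T) := by
      rw [Matrix.conjTranspose_mul, hTH]
      noncomm_ring
    rw [e3, Matrix.trace_mul_comm]
  have hSM : S * M = 0 := by
    have h1' := trace_ct_mul_self_nonneg (S * M)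
    have h2' := trace_ct_mul_self_nonneg (M * T)
    have hz : ((S * M)ᴴ * (S * M)).trace = 0 := by
      have : ((S * M)ᴴ * (S * M)).trace ≤ 0 := by
        rw [traceeq]; exact neg_nonpos_of_nonneg h2'
      exact le_antisymm this h1'
    exact eq_zero_of_trace_ct_mul_self_eq_zero hz
  have hM0 : M = 0 := by
    have hAM : A * M = 0 := by
      rw [← hS2, Matrix.mul_assoc, hSM, Matrix.mul_zero]
    have := congrArg (fun Y => A⁻¹ * Y) hAM
    simpa [← Matrix.mul_assoc, Matrix.nonsing_inv_mul A hdetA] using this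
  have hxB : x * B = A * x := (sub_eq_zero.mp hM0).symm
  rw [Matrix.mul_assoc, hxB, ← Matrix.mul_assoc, Matrix.nonsing_inv_mul A hdetA, Matrix.one_mul]
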